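/- Let n ≥ 2 be a natural number, let Mₖ = cos(kπ/n)·σx + sin(kπ/n)·σy for k = 1,…,n, and let |GHZ⟩ = (|0⟩^{⊗n} + |1⟩^{⊗n})/√2 ∈ ℂ^{2ⁿ}. Then, as 2ⁿ×2ⁿ complex matrices, (1/2)·[ 𝟙^{⊗n} − Σ_{ℓ=±1} ((𝟙 + ℓ·σz)/2)^{⊗n} − (1/n)·Σ_{k=1}^{n} (−1)^k · Mₖ^{⊗n} ] = (1/2)·𝟙^{⊗n} − |GHZ⟩⟨GHZ|. -/

import Mathlib

open Matrix Real

noncomputable def σx : Matrix (Fin 2) (Fin 2) ℂ := !![0, 1; 1, 0]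
noncomputable def σy : Matrix (Fin 2) (Fin 2) ℂ := !![0, -Complex.I; Complex.I, 0]
noncomputable def σz : Matrix (Fin 2) (Fin 2) ℂ := !![1, 0; 0, -1]

/-- n-fold Kronecker power A^{⊗n} of a 2×2 matrix, on the index set Fin n → Fin 2. -/
noncomputable def kronPow (n : ℕ) (A : Matrix (Fin 2) (Fin 2) ℂ) :
    Matrix (Fin n → Fin 2) (Fin n → Fin 2) ℂ :=
  Matrix.of fun i j => ∏ t, A (i t) (j t)

/-- n-fold tensor power v^{⊗n} of a vector in ℂ². -/
noncomputable def tensPow (n : ℕ) (v : Fin 2 → ℂ) : (Fin n → Fin 2) → ℂ :=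
  fun i => ∏ t, v (i t)

/-- The n-qubit GHZ state (|0⟩^{⊗n} + |1⟩^{⊗n})/√2. -/
noncomputable def GHZ (n : ℕ) : (Fin n → Fin 2) → ℂ :=
  fun i => (tensPow n ![1, 0] i + tensPow n ![0, 1] i) / (Real.sqrt 2 : ℂ)

/- ======= auxiliary lemmas ======= -/

lemma aux_geomIcc (z : ℂ) (n : ℕ) (hn : 0 < n) (hz : z ^ n = 1) :
    ∑ k ∈ Finset.Icc 1 n, z ^ k = if z = 1 then (n : ℂ) else 0 := by
  by_cases h1 : z = 1
  · simp [h1]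
  · rw [if_neg h1, show Finset.Icc 1 n = Finset.Ico 1 (n+1) by rw [Finset.Ico_add_one_right_eq_Icc],
      geom_sum_Ico h1 (by omega)]
    rw [pow_succ, hz]
    simp

lemma aux_zpow (n m : ℕ) (hn : 0 < n) :
    Complex.exp (2 * π * m / n * Complex.I) ^ n = 1 := by
  rw [← Complex.exp_nat_mul]
  have hne : (n:ℂ) ≠ 0 := by exact_mod_cast hn.ne'
  rw [show (n:ℂ) * (2 * π * m / n * Complex.I) = m * (2 * π * Complex.I) by field_simp]
  rw [Complex.exp_nat_mul, Complex.exp_two_pi_mul_I, one_pow]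

lemma aux_zeq1 (n m : ℕ) (hn : 0 < n) (hm : m ≤ n) :
    Complex.exp (2 * π * m / n * Complex.I) = 1 ↔ (m = 0 ∨ m = n) := by
  have hne : (n:ℂ) ≠ 0 := by exact_mod_cast hn.ne'
  have hπ : (π:ℂ) ≠ 0 := by exact_mod_cast Real.pi_ne_zero
  constructor
  · intro h
    rw [Complex.exp_eq_one_iff] at h
    obtain ⟨k, hk⟩ := h
    have h2 : (2*(π:ℂ)*Complex.I) * m = (2*π*Complex.I) * (k*n) := by
      field_simp at hk; linear_combination (2*(π:ℂ)*Complex.I) * hk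
    have h3 : (m:ℂ) = (k:ℂ) * n :=
      mul_left_cancel₀ (by simp [hπ, Complex.I_ne_zero, Real.pi_ne_zero]) h2
    have h4 : (m:ℤ) = k * n := by exact_mod_cast h3
    by_contra hc
    push_neg at hc
    obtain ⟨h0, hN⟩ := hc
    have hn' : (0:ℤ) < n := by exact_mod_cast hn
    have hm0 : 0 < (m:ℤ) := by exact_mod_cast Nat.pos_of_ne_zero h0
    have hk1 : 1 ≤ k := by nlinarith
    have : (n:ℤ) ≤ m := by nlinarith
    have : (m:ℤ) ≤ n := by exact_mod_cast hm
    have : m = n := by omega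
    exact hN this
  · rintro (rfl | rfl)
    · simp
    · rw [mul_div_assoc, div_self hne, mul_one, Complex.exp_two_pi_mul_I]

lemma aux_term_eq (n m k : ℕ) (hn : 0 < n) :
    (-1:ℂ)^k * Complex.exp ((2*(m:ℂ) - n) * ((k:ℂ) * π / n) * Complex.I)
      = Complex.exp (2 * π * m / n * Complex.I) ^ k := by
  have hne : (n:ℂ) ≠ 0 := by exact_mod_cast hn.ne'
  rw [← Complex.exp_pi_mul_I, ← Complex.exp_nat_mul, ← Complex.exp_nat_mul, ← Complex.exp_add]
  congr 1
  field_simp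
  ring

lemma aux_proj1 (a b : Fin 2) :
    ((1/2:ℂ) • ((1 : Matrix (Fin 2) (Fin 2) ℂ) + (1:ℝ) • σz)) a b
      = if a = 0 ∧ b = 0 then 1 else 0 := by
  fin_cases a <;> fin_cases b <;> norm_num [σz, Matrix.one_apply]

lemma aux_projm1 (a b : Fin 2) :
    ((1/2:ℂ) • ((1 : Matrix (Fin 2) (Fin 2) ℂ) + (-1:ℝ) • σz)) a b
      = if a = 1 ∧ b = 1 then 1 else 0 := by
  fin_cases a <;> fin_cases b <;> norm_num [σz, Matrix.one_apply]

lemma aux_M_entry (θ : ℝ) (a b : Fin 2) :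
    (Real.cos θ • σx + Real.sin θ • σy) a b
      = if a = b then 0 else Complex.exp ((((a:ℕ):ℂ) - ((b:ℕ):ℂ)) * θ * Complex.I) := by
  fin_cases a <;> fin_cases b <;> simp [σx, σy]
  · rw [show -((θ:ℂ) * Complex.I) = (-θ : ℂ) * Complex.I by ring,
      Complex.exp_mul_I, Complex.cos_neg, Complex.sin_neg]
    ring
  · rw [Complex.exp_mul_I]

lemma aux_kron_proj1 (n : ℕ) (i j : Fin n → Fin 2) :
    kronPow n ((1/2:ℂ) • ((1 : Matrix (Fin 2) (Fin 2) ℂ) + (1:ℝ) • σz)) i j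
      = if ∀ t, i t = 0 ∧ j t = 0 then 1 else 0 := by
  unfold kronPow
  simp only [Matrix.of_apply]
  rw [Finset.prod_congr rfl (fun t _ => aux_proj1 (i t) (j t)), Finset.prod_boole]
  simp

lemma aux_kron_projm1 (n : ℕ) (i j : Fin n → Fin 2) :
    kronPow n ((1/2:ℂ) • ((1 : Matrix (Fin 2) (Fin 2) ℂ) + (-1:ℝ) • σz)) i j
      = if ∀ t, i t = 1 ∧ j t = 1 then 1 else 0 := by
  unfold kronPow
  simp only [Matrix.of_apply]
  rw [Finset.prod_congr rfl (fun t _ => aux_projm1 (i t) (j t)), Finset.prod_boole]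
  simp

lemma aux_v10 (a : Fin 2) : (![1,0] : Fin 2 → ℂ) a = if a = 0 then 1 else 0 := by
  fin_cases a <;> simp

lemma aux_v01 (a : Fin 2) : (![0,1] : Fin 2 → ℂ) a = if a = 1 then 1 else 0 := by
  fin_cases a <;> simp

lemma aux_tensPow0 (n : ℕ) (i : Fin n → Fin 2) :
    tensPow n ![1, 0] i = if ∀ t, i t = 0 then 1 else 0 := by
  unfold tensPow
  rw [Finset.prod_congr rfl (fun t _ => aux_v10 (i t)), Finset.prod_boole]
  simp

lemma aux_tensPow1 (n : ℕ) (i : Fin n → Fin 2) :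
    tensPow n ![0, 1] i = if ∀ t, i t = 1 then 1 else 0 := by
  unfold tensPow
  rw [Finset.prod_congr rfl (fun t _ => aux_v01 (i t)), Finset.prod_boole]
  simp

lemma aux_GHZ_prod (n : ℕ) (i j : Fin n → Fin 2) :
    GHZ n i * (starRingEnd ℂ) (GHZ n j)
      = ((if ∀ t, i t = 0 then 1 else 0) + (if ∀ t, i t = 1 then 1 else 0))
        * ((if ∀ t, j t = 0 then 1 else 0) + (if ∀ t, j t = 1 then 1 else 0)) / 2 := by
  unfold GHZ
  rw [aux_tensPow0, aux_tensPow1, aux_tensPow0, aux_tensPow1]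
  have h2 : ((Real.sqrt 2 : ℂ)) * ((Real.sqrt 2 : ℂ)) = 2 := by
    rw [← Complex.ofReal_mul, Real.mul_self_sqrt (by norm_num)]
    norm_num
  have hconj : (starRingEnd ℂ) (((if ∀ t, j t = 0 then 1 else 0)
        + (if ∀ t, j t = 1 then 1 else 0)) / (Real.sqrt 2 : ℂ))
      = ((if ∀ t, j t = 0 then 1 else 0) + (if ∀ t, j t = 1 then 1 else 0)) / (Real.sqrt 2 : ℂ) := by
    split_ifs <;> simp [Complex.conj_ofReal]
  rw [hconj, div_mul_div_comm, h2]

lemma aux_M_prod (n : ℕ) (hn : 0 < n) (i j : Fin n → Fin 2) (h : ∀ t, i t ≠ j t) (k : ℕ) :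
    (-1:ℂ)^k * kronPow n (Real.cos (k*π/n) • σx + Real.sin (k*π/n) • σy) i j
      = Complex.exp (2 * π * ((∑ t, (i t : ℕ) : ℕ) : ℂ) / n * Complex.I) ^ k := by
  have hv : ∀ t, ((i t : ℕ) : ℂ) + ((j t : ℕ) : ℂ) = 1 := by
    intro t
    have h1 : (i t : ℕ) < 2 := (i t).isLt
    have h2 : (j t : ℕ) < 2 := (j t).isLt
    have h3 : (i t : ℕ) ≠ (j t : ℕ) := fun hq => h t (Fin.ext hq)
    have : (i t : ℕ) + (j t : ℕ) = 1 := by omega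
    exact_mod_cast this
  unfold kronPow
  simp only [Matrix.of_apply]
  rw [Finset.prod_congr rfl (fun t _ => by rw [aux_M_entry (k*π/n) (i t) (j t), if_neg (h t)]),
    ← Complex.exp_sum]
  have hs : ∑ t, (((i t : ℕ) : ℂ) - ((j t : ℕ) : ℂ)) * ((k*π/n : ℝ) : ℂ) * Complex.I
      = (2 * (∑ t, ((i t : ℕ) : ℂ)) - n) * ((k:ℂ) * π / n) * Complex.I := by
    rw [← Finset.sum_mul, ← Finset.sum_mul, Finset.sum_sub_distrib]
    have hj : ∑ t, ((j t : ℕ) : ℂ) = n - ∑ t, ((i t : ℕ) : ℂ) := by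
      have := Finset.sum_congr rfl (fun t (_ : t ∈ Finset.univ) => hv t)
      rw [Finset.sum_add_distrib] at this
      simp at this
      linear_combination this
    rw [hj]
    push_cast
    ring
  rw [hs]
  have hcast : ∑ t, ((i t : ℕ) : ℂ) = (((∑ t, (i t : ℕ) : ℕ) : ℕ) : ℂ) := by push_cast; rfl
  rw [hcast]
  exact aux_term_eq n (∑ t, (i t : ℕ)) k hn

theorem stmt13 (n : ℕ) (hn : 2 ≤ n) :
    (1 / 2 : ℂ) • ((1 : Matrix (Fin n → Fin 2) (Fin n → Fin 2) ℂ)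
        - ∑ l ∈ ({1, -1} : Finset ℝ),
            kronPow n ((1 / 2 : ℂ) • ((1 : Matrix (Fin 2) (Fin 2) ℂ) + l • σz))
        - (n : ℂ)⁻¹ • ∑ k ∈ Finset.Icc 1 n, ((-1 : ℂ)) ^ k •
            kronPow n (cos (k * π / n) • σx + sin (k * π / n) • σy))
      = (1 / 2 : ℂ) • (1 : Matrix (Fin n → Fin 2) (Fin n → Fin 2) ℂ)
        - vecMulVec (GHZ n) (star (GHZ n)) := by
  have hn0 : 0 < n := by omega
  have hne : (n:ℂ) ≠ 0 := by exact_mod_cast hn0.ne'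
  ext i j
  rw [Finset.sum_pair (show (1:ℝ) ≠ -1 by norm_num)]
  simp only [Matrix.smul_apply, Matrix.sub_apply, Matrix.add_apply, Matrix.sum_apply,
    Matrix.one_apply, smul_eq_mul, Matrix.vecMulVec_apply, Pi.star_apply, RCLike.star_def]
  rw [aux_kron_proj1, aux_kron_projm1, aux_GHZ_prod]
  have fin2a : ∀ a : Fin 2, a ≠ 0 → a = 1 := by decide
  have fin2b : ∀ a : Fin 2, a ≠ 1 → a = 0 := by decide
  set t0 : Fin n := ⟨0, hn0⟩ with ht0def
  by_cases hd : ∀ t, i t ≠ j t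
  · -- all coordinates differ
    set m : ℕ := ∑ t, (i t : ℕ) with hmdef
    have hm : m ≤ n := by
      calc m ≤ ∑ _t : Fin n, 1 := Finset.sum_le_sum (fun t _ => by omega)
        _ = n := by simp
    have hS : ∑ x ∈ Finset.Icc 1 n, (-1:ℂ)^x *
          kronPow n (Real.cos (x*π/n) • σx + Real.sin (x*π/n) • σy) i j
        = if m = 0 ∨ m = n then (n:ℂ) else 0 := by
      rw [Finset.sum_congr rfl (fun k _ => aux_M_prod n hn0 i j hd k),
        aux_geomIcc _ n hn0 (aux_zpow n m hn0)]
      simp only [aux_zeq1 n m hn0 hm]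
    rw [hS]
    have hij : i ≠ j := fun hq => hd t0 (by rw [hq])
    have h00 : ¬ (∀ t, i t = 0 ∧ j t = 0) := fun hq => hd t0 (((hq t0).1).trans ((hq t0).2).symm)
    have h11 : ¬ (∀ t, i t = 1 ∧ j t = 1) := fun hq => hd t0 (((hq t0).1).trans ((hq t0).2).symm)
    rw [if_neg hij, if_neg h00, if_neg h11]
    have hm0 : m = 0 ↔ ∀ t, i t = 0 := by
      rw [hmdef, Finset.sum_eq_zero_iff]
      constructor
      · intro hq t; exact Fin.ext (hq t (Finset.mem_univ t))
      · intro hq t _; rw [hq t]; rfl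
    have hmn : m = n ↔ ∀ t, i t = 1 := by
      constructor
      · intro hq t
        by_contra hq2
        have h1 : (i t : ℕ) = 0 := by rw [fin2b _ hq2]; rfl
        have hlt : m < n := by
          calc m < ∑ _t : Fin n, 1 :=
                Finset.sum_lt_sum (fun s _ => by omega) ⟨t, Finset.mem_univ t, by omega⟩
            _ = n := by simp
        omega
      · intro hq
        rw [hmdef]
        simp [hq]
    by_cases hA : ∀ t, i t = 0
    · have hj1 : ∀ t, j t = 1 := fun t => fin2a _ (fun hq => hd t ((hA t).trans hq.symm))
      have hni1 : ¬ ∀ t, i t = 1 := fun hq => absurd ((hA t0).symm.trans (hq t0)) (by decide)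
      have hnj0 : ¬ ∀ t, j t = 0 := fun hq => absurd ((hj1 t0).symm.trans (hq t0)) (by decide)
      rw [if_pos (Or.inl (hm0.mpr hA)), if_pos hA, if_neg hni1, if_neg hnj0, if_pos hj1]
      field_simp
      ring
    · by_cases hB : ∀ t, i t = 1
      · have hj0 : ∀ t, j t = 0 := fun t => fin2b _ (fun hq => hd t ((hB t).trans hq.symm))
        have hnj1 : ¬ ∀ t, j t = 1 := fun hq => absurd ((hj0 t0).symm.trans (hq t0)) (by decide)
        rw [if_pos (Or.inr (hmn.mpr hB)), if_neg hA, if_pos hB, if_pos hj0, if_neg hnj1]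
        field_simp
        ring
      · rw [if_neg (by rw [hm0, hmn]; tauto), if_neg hA, if_neg hB]
        ring
  · push_neg at hd
    obtain ⟨t1, ht1⟩ := hd
    have hK : ∀ x : ℕ, kronPow n (Real.cos (x*π/n) • σx + Real.sin (x*π/n) • σy) i j = 0 := by
      intro x
      unfold kronPow
      simp only [Matrix.of_apply]
      exact Finset.prod_eq_zero (Finset.mem_univ t1) (by rw [aux_M_entry, if_pos ht1])
    simp only [hK, mul_zero, Finset.sum_const_zero]
    by_cases hij : i = j
    · subst hij
      rw [if_pos rfl]
      simp only [and_self]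
      by_cases hA : ∀ t, i t = 0
      · have hni1 : ¬ ∀ t, i t = 1 := fun hq => absurd ((hA t0).symm.trans (hq t0)) (by decide)
        rw [if_pos hA, if_neg hni1]
        ring
      · by_cases hB : ∀ t, i t = 1
        · rw [if_neg hA, if_pos hB]; ring
        · rw [if_neg hA, if_neg hB]; ring
    · have h00 : ¬ (∀ t, i t = 0 ∧ j t = 0) := fun hq => hij (funext fun t => ((hq t).1).trans ((hq t).2).symm)
      have h11 : ¬ (∀ t, i t = 1 ∧ j t = 1) := fun hq => hij (funext fun t => ((hq t).1).trans ((hq t).2).symm)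
      rw [if_neg hij, if_neg h00, if_neg h11]
      by_cases hA : ∀ t, i t = 0
      · by_cases hC : ∀ t, j t = 0
        · exact absurd (funext fun t => (hA t).trans (hC t).symm) hij
        · by_cases hD : ∀ t, j t = 1
          · exact absurd (by rw [← hA t1, ht1, hD t1] : (0:Fin 2) = 1).symm (by decide)
          · rw [if_pos hA, if_neg hC, if_neg hD]; ring
      · by_cases hB : ∀ t, i t = 1
        · by_cases hD : ∀ t, j t = 1
          · exact absurd (funext fun t => (hB t).trans (hD t).symm) hij
          · by_cases hC : ∀ t, j t = 0
            · exact absurd (by rw [← hB t1, ht1, hC t1] : (1:Fin 2) = 0) (by decide)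
            · rw [if_neg hA, if_pos hB, if_neg hC, if_neg hD]; ring
        · rw [if_neg hA, if_neg hB]; ring
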